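/- Let $(u_\lambda, \mathcal{V}_\lambda^*, \kappa_\lambda)_{\lambda\in\Lambda}$ be a TI-DFD for a closed injective linear operator $\mathcal{K}$. If $\inf_{\lambda}\kappa_\lambda = 0$ and $\inf_\lambda\|\mathcal{V}_\lambda^*\| > 0$, then $\mathcal{K}^{-1}$ is unbounded. -/

import Mathlib

open MeasureTheory Complex Real
open scoped Classical

noncomputable section

/-- `Ed d` is Euclidean space `ℝ^d`. -/
abbrev Ed (d : ℕ) := EuclideanSpace ℝ (Fin d)

/-- `L2 d` is the Hilbert space `L²(ℝ^d, ℂ)`. -/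
abbrev L2 (d : ℕ) := MeasureTheory.Lp ℂ 2 (volume : Measure (Ed d))

/-- An extension of the Fourier transform (normalization `f̂(ξ) = ∫ f(x) e^{-i⟨ξ,x⟩} dx`)
to a linear bijection of `L²(ℝ^d)` satisfying the Plancherel identity
`‖f̂‖² = (2π)^d ‖f‖²`. -/
structure FourierL2 (d : ℕ) where
  F : L2 d ≃ₗ[ℂ] L2 d
  plancherel : ∀ f : L2 d, ‖F f‖ ^ 2 = (2 * Real.pi) ^ d * ‖f‖ ^ 2
  eq_integral : ∀ f : L2 d, MeasureTheory.Integrable (f : Ed d → ℂ) →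
    (F f : Ed d → ℂ) =ᵐ[volume]
      fun ξ => ∫ x, Complex.exp (-(Complex.I * ((inner ℝ ξ x : ℝ) : ℂ))) * f x

/-- The convolution `u^* ∗ f := 𝓕⁻¹((conj 𝓕u) ⬝ 𝓕f)`, well defined in `L²` whenever
`𝓕u ∈ L^∞`. -/
def starConv {d : ℕ} (Φ : FourierL2 d) (u f : L2 d) : L2 d :=
  if h : MemLp (fun ξ => (starRingEnd ℂ) ((Φ.F u : Ed d → ℂ) ξ) * (Φ.F f : Ed d → ℂ) ξ)
      2 (volume : Measure (Ed d))
  then Φ.F.symm (h.toLp _) else 0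

/-- The convolution `w ∗ c := 𝓕⁻¹((𝓕w) ⬝ 𝓕c)`, well defined in `L²` whenever
`𝓕w ∈ L^∞`. -/
def conv {d : ℕ} (Φ : FourierL2 d) (w c : L2 d) : L2 d :=
  if h : MemLp (fun ξ => (Φ.F w : Ed d → ℂ) ξ * (Φ.F c : Ed d → ℂ) ξ)
      2 (volume : Measure (Ed d))
  then Φ.F.symm (h.toLp _) else 0

/-- `(u_λ)` is a translation invariant frame of `L²(ℝ^d)` with bounds `A, B`:
all `𝓕u_λ ∈ L^∞` and `A‖f‖² ≤ ∑_λ ‖u_λ^* ∗ f‖² ≤ B‖f‖²` for every `f ∈ L²`. -/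
def IsTIFrame {d : ℕ} {Λ : Type*} (Φ : FourierL2 d) (u : Λ → L2 d) (A B : ℝ) : Prop :=
  (∀ l : Λ, MemLp ((Φ.F (u l) : Ed d → ℂ)) ⊤ (volume : Measure (Ed d))) ∧
  0 < A ∧ 0 < B ∧
  ∀ f : L2 d,
    A * ‖f‖ ^ 2 ≤ ∑' l : Λ, ‖starConv Φ (u l) f‖ ^ 2 ∧
    ∑' l : Λ, ‖starConv Φ (u l) f‖ ^ 2 ≤ B * ‖f‖ ^ 2

/-- If `(u_λ, 𝒱_λ^*, κ_λ)` is a TI-DFD for a closed injective linear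
operator `𝒦`, `inf_λ κ_λ = 0` and `inf_λ ‖𝒱_λ^*‖ > 0` (operator norms of the
restrictions to the closure of `ran 𝒦`), then `𝒦⁻¹` is unbounded. -/
theorem ti_dfd_inverse_unbounded {d : ℕ} {Λ : Type*} [Countable Λ]
    {Y : Type*} [NormedAddCommGroup Y] [InnerProductSpace ℂ Y] [CompleteSpace Y]
    (Φ : FourierL2 d)
    (dom : Submodule ℂ (L2 d)) (K : dom →ₗ[ℂ] Y)
    (hclosed : IsClosed {p : L2 d × Y | ∃ hp : p.1 ∈ dom, K ⟨p.1, hp⟩ = p.2})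
    (hinj : Function.Injective K)
    -- the TI-DFD (u, 𝒱^*, κ):
    (u : Λ → L2 d) (hu : ∃ A B : ℝ, IsTIFrame Φ u A B)
    (V : Λ → Y →L[ℂ] L2 d)
    (hV : ∃ A B : ℝ, 0 < A ∧ 0 < B ∧ ∀ g ∈ closure (Set.range fun f : dom => K f),
      A * ‖g‖ ^ 2 ≤ ∑' l : Λ, ‖V l g‖ ^ 2 ∧ ∑' l : Λ, ‖V l g‖ ^ 2 ≤ B * ‖g‖ ^ 2)
    (κ : Λ → ℝ) (hκ : ∀ l, 0 < κ l)
    (hdiag : ∀ (f : dom) (l : Λ), V l (K f) = κ l • starConv Φ (u l) (f : L2 d))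
    -- inf_λ κ_λ = 0:
    (hinf0 : ∀ ε > (0 : ℝ), ∃ l : Λ, κ l < ε)
    -- inf_λ ‖𝒱_λ^*|_{closure ran 𝒦}‖ > 0:
    (hVlow : ∃ c > (0 : ℝ), ∀ l : Λ, ∃ g ∈ closure (Set.range fun f : dom => K f),
      ‖g‖ ≤ 1 ∧ c ≤ ‖V l g‖) :
    ¬ ∃ C : ℝ, ∀ f : dom, ‖(f : L2 d)‖ ≤ C * ‖K f‖ := by
  rintro ⟨C, hC⟩
  obtain ⟨A, B, hFu, hA, hB, hbound⟩ := hu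
  obtain ⟨c, hc, hVg⟩ := hVlow
  set C' : ℝ := max C 1 with hC'def
  have hC'pos : (0 : ℝ) < C' := lt_of_lt_of_le one_pos (le_max_right _ _)
  have hC' : ∀ f : dom, ‖(f : L2 d)‖ ≤ C' * ‖K f‖ := fun f =>
    (hC f).trans (mul_le_mul_of_nonneg_right (le_max_left _ _) (norm_nonneg _))
  have hM : (0 : ℝ) < Real.sqrt B * C' := mul_pos (Real.sqrt_pos.mpr hB) hC'pos
  -- key bound on `ran K`
  have key : ∀ (l : Λ) (f : dom), ‖V l (K f)‖ ≤ κ l * (Real.sqrt B * C') * ‖K f‖ := by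
    intro l f
    by_cases hs : Summable (fun l => ‖starConv Φ (u l) (f : L2 d)‖ ^ 2)
    · have h1 : ‖starConv Φ (u l) (f : L2 d)‖ ^ 2 ≤ B * ‖(f : L2 d)‖ ^ 2 :=
        (Summable.le_tsum hs l (fun _ _ => sq_nonneg _)).trans (hbound _).2
      have h2 : ‖starConv Φ (u l) (f : L2 d)‖ ≤ Real.sqrt B * ‖(f : L2 d)‖ := by
        have h3 := Real.sqrt_le_sqrt h1
        rwa [Real.sqrt_mul hB.le, Real.sqrt_sq (norm_nonneg _),
          Real.sqrt_sq (norm_nonneg _)] at h3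
      calc ‖V l (K f)‖ = κ l * ‖starConv Φ (u l) (f : L2 d)‖ := by
            rw [hdiag, norm_smul, Real.norm_of_nonneg (hκ l).le]
        _ ≤ κ l * (Real.sqrt B * ‖(f : L2 d)‖) :=
            mul_le_mul_of_nonneg_left h2 (hκ l).le
        _ ≤ κ l * (Real.sqrt B * (C' * ‖K f‖)) :=
            mul_le_mul_of_nonneg_left
              (mul_le_mul_of_nonneg_left (hC' f) (Real.sqrt_nonneg _)) (hκ l).le
        _ = κ l * (Real.sqrt B * C') * ‖K f‖ := by ring
    · have ht := tsum_eq_zero_of_not_summable hs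
      have hlow := (hbound (f : L2 d)).1
      rw [ht] at hlow
      have hx : ‖(f : L2 d)‖ ^ 2 ≤ 0 := by
        by_contra h
        push_neg at h
        nlinarith
      have hle : ‖(f : L2 d)‖ ≤ 0 := by nlinarith [norm_nonneg (f : L2 d)]
      have hn : ‖(f : L2 d)‖ = 0 := le_antisymm hle (norm_nonneg _)
      have hf0 : f = 0 := Subtype.ext (by simpa using norm_eq_zero.mp hn)
      subst hf0
      simp [map_zero, (hκ l).le, hM.le]
  -- extend to the closure of `ran K`
  have key' : ∀ (l : Λ), ∀ g ∈ closure (Set.range fun f : dom => K f),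
      ‖V l g‖ ≤ κ l * (Real.sqrt B * C') * ‖g‖ := by
    intro l g hg
    have hclosedS : IsClosed {g : Y | ‖V l g‖ ≤ κ l * (Real.sqrt B * C') * ‖g‖} :=
      isClosed_le ((V l).continuous.norm) (continuous_const.mul continuous_norm)
    have hsub : Set.range (fun f : dom => K f) ⊆
        {g : Y | ‖V l g‖ ≤ κ l * (Real.sqrt B * C') * ‖g‖} := by
      rintro _ ⟨f, rfl⟩; exact key l f
    exact closure_minimal hsub hclosedS hg
  -- choose l with small κ l and reach a contradiction
  obtain ⟨l, hl⟩ := hinf0 (c / (Real.sqrt B * C')) (div_pos hc hM)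
  obtain ⟨g, hg, hg1, hgc⟩ := hVg l
  have h4 : ‖V l g‖ ≤ κ l * (Real.sqrt B * C') :=
    (key' l g hg).trans
      (by simpa using mul_le_mul_of_nonneg_left hg1 (mul_nonneg (hκ l).le hM.le))
  have h5 : κ l * (Real.sqrt B * C') < c := (lt_div_iff₀ hM).mp hl
  linarith

end
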